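/- arXiv:2312.13916 — 2 statements merged into one kernel-verified Lean document; each statement's English description precedes it below -/
import Mathlib

section
/- For every n ≥ 1, the map sending a subgroup Γ̄ of PSL(2,ℤ) of index n to the pair (σ, α) of permutations of the n-element coset space PSL(2,ℤ)/Γ̄ induced by left multiplication by ST and by S induces a bijection between the set of conjugacy classes of index-n subgroups of PSL(2,ℤ) and the set of equivalence classes of pairs (σ, α) of permutations of an n-element set with σ³ = id, α² = id and the subgroup generated by σ and α acting transitively, where two pairs are equivalent if they are simultaneously conjugate by a bijection of the underlying sets. -/
open Matrix

/-- `SL(2,ℤ)`: the group of 2×2 integer matrices of determinant 1. -/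
abbrev SL2Z := Matrix.SpecialLinearGroup (Fin 2) ℤ

instance : Fact (Even (Fintype.card (Fin 2))) := ⟨by simp⟩

/-- The subgroup `{±I}` of `SL(2,ℤ)`. -/
def pmOne : Subgroup SL2Z := Subgroup.zpowers (-1 : SL2Z)

instance : pmOne.Normal := by
  constructor
  intro x hx g
  obtain ⟨n, rfl⟩ := hx
  have h : Commute ((-1 : SL2Z) ^ n) g := (Commute.neg_one_left g).zpow_left n
  refine ⟨n, ?_⟩
  rw [← h.eq, mul_assoc, mul_inv_cancel, mul_one]

/-- `PSL(2,ℤ)`, the modular group, as the quotient of `SL(2,ℤ)` by `{±I}`. -/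
abbrev PSL2Z := SL2Z ⧸ pmOne

/-- The natural projection `ξ : SL(2,ℤ) → PSL(2,ℤ)`. -/
def xi : SL2Z →* PSL2Z := QuotientGroup.mk' pmOne

/-- The element `S` of `PSL(2,ℤ)`, the image of `[[0,-1],[1,0]]`. -/
def Sp : PSL2Z := xi ⟨!![0, -1; 1, 0], by norm_num [Matrix.det_fin_two_of]⟩

/-- The element `T` of `PSL(2,ℤ)`, the image of `[[1,1],[0,1]]`. -/
def Tp : PSL2Z := xi ⟨!![1, 1; 0, 1], by norm_num [Matrix.det_fin_two_of]⟩

/-- The number of left cosets in `PSL(2,ℤ)/Γ` fixed by `g` (for the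
left-multiplication action).  For `g = S` this is `e₂(Γ)`, for `g = S*T` it is `e₃(Γ)`. -/
noncomputable def nFix (g : PSL2Z) (Γ : Subgroup PSL2Z) : ℕ :=
  Nat.card {x : PSL2Z ⧸ Γ // g • x = x}

/-- The number of orbits of the cyclic subgroup generated by `g` on `PSL(2,ℤ)/Γ`.
For `g = S, S*T, T` these are `c₂(Γ), c₃(Γ), h(Γ)` respectively. -/
noncomputable def nOrb (g : PSL2Z) (Γ : Subgroup PSL2Z) : ℕ :=
  Nat.card (MulAction.orbitRel.Quotient (Subgroup.zpowers g) (PSL2Z ⧸ Γ))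

/-- `Γ` has genus zero: `c₂(Γ) + c₃(Γ) + h(Γ) = index(Γ) + 2`. -/
def GenusZero (Γ : Subgroup PSL2Z) : Prop :=
  nOrb Sp Γ + nOrb (Sp * Tp) Γ + nOrb Tp Γ = Γ.index + 2

/-- `Γ` is torsion free: it contains no nontrivial element of finite order. -/
def TorsionFree (Γ : Subgroup PSL2Z) : Prop :=
  ∀ x ∈ Γ, x ≠ 1 → ¬ IsOfFinOrder x

/-- Two subgroups of a group are conjugate. -/
def SubgroupConj {G : Type*} [Group G] (H K : Subgroup G) : Prop :=
  ∃ g : G, Subgroup.map (MulAut.conj g).toMonoidHom H = K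

/-- The number of conjugacy classes of subgroups of `PSL(2,ℤ)` satisfying `P`. -/
noncomputable def countClasses (P : Subgroup PSL2Z → Prop) : ℕ :=
  Nat.card (Quot fun A B : {Γ : Subgroup PSL2Z // P Γ} => SubgroupConj A.1 B.1)

/-- The index of the torsion free subgroup `Γ^tf` associated to `Γ`:
`index(Γ) + 3·e₂(Γ) + 2·e₃(Γ)`. -/
noncomputable def tfIdx (Γ : Subgroup PSL2Z) : ℕ :=
  Γ.index + 3 * nFix Sp Γ + 2 * nFix (Sp * Tp) Γ

/-- A hypermap of size `n`: permutations `σ, α` of an `n`-element set with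
`σ³ = 1`, `α² = 1`, generating a transitive subgroup. -/
structure Hypermap (n : ℕ) where
  sigma : Equiv.Perm (Fin n)
  alpha : Equiv.Perm (Fin n)
  sigma_cube : sigma ^ 3 = 1
  alpha_sq : alpha ^ 2 = 1
  trans : ∀ x y : Fin n, ∃ g ∈ Subgroup.closure ({sigma, alpha} : Set (Equiv.Perm (Fin n))), g x = y

/-- Equivalence of hypermaps: simultaneous conjugation. -/
def HypermapEquiv {n : ℕ} (M N : Hypermap n) : Prop :=
  ∃ ψ : Equiv.Perm (Fin n),
    (∀ x, ψ (M.sigma x) = N.sigma (ψ x)) ∧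
    (∀ x, ψ (M.alpha x) = N.alpha (ψ x))


namespace ConjHyper

open ModularGroup

lemma Ssq : (ModularGroup.S)^2 = (-1 : SL2Z) := by
  ext i j
  rw [show ((ModularGroup.S^2 : SL2Z) : Matrix (Fin 2) (Fin 2) ℤ) = S.1 * S.1 from by
    simp [pow_two]]
  rw [S_mul_S_eq]
  rfl

lemma T_zpow_eq (b : ℤ) (M : SL2Z) (h : M.1 = !![1, b; 0, 1]) : M = ModularGroup.T ^ b := by
  ext i j
  rw [h, coe_T_zpow]

lemma SL2Z_closure_ST : Subgroup.closure ({ModularGroup.S, ModularGroup.T} : Set SL2Z) = ⊤ := by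
  rw [eq_top_iff]
  intro M _
  set cl := Subgroup.closure ({ModularGroup.S, ModularGroup.T} : Set SL2Z) with hcl
  have hS : ModularGroup.S ∈ cl := Subgroup.subset_closure (by simp)
  have hT : ModularGroup.T ∈ cl := Subgroup.subset_closure (by simp)
  suffices H : ∀ k : ℕ, ∀ M : SL2Z, (M.1 1 0).natAbs = k → M ∈ cl by
    exact H _ M rfl
  intro k
  induction k using Nat.strong_induction_on with
  | _ k IH =>
    intro M hk
    have hdet := M.2
    rw [Matrix.det_fin_two] at hdet
    rcases eq_or_ne k 0 with rfl | hk0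
    · -- bottom-left entry is zero
      have hc : M.1 1 0 = 0 := Int.natAbs_eq_zero.mp hk
      rw [hc, mul_zero, sub_zero] at hdet
      have hM : M.1 = !![M.1 0 0, M.1 0 1; M.1 1 0, M.1 1 1] := Matrix.etaExpand_eq M.1 |>.symm
      rcases Int.eq_one_or_neg_one_of_mul_eq_one' hdet with ⟨h1, h2⟩ | ⟨h1, h2⟩
      · have : M = ModularGroup.T ^ (M.1 0 1) := by
          ext i j
          rw [coe_T_zpow]
          fin_cases i <;> fin_cases j <;> simp [h1, h2, hc]
        rw [this]; exact Subgroup.zpow_mem cl hT _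
      · have : M = ModularGroup.S ^ 2 * ModularGroup.T ^ (-(M.1 0 1)) := by
          rw [Ssq]
          ext i j
          rw [Matrix.SpecialLinearGroup.coe_mul, coe_T_zpow,
            Matrix.SpecialLinearGroup.coe_neg, Matrix.SpecialLinearGroup.coe_one, neg_mul,
            one_mul]
          fin_cases i <;> fin_cases j <;> simp [h1, h2, hc]
        rw [this]
        exact mul_mem (pow_mem hS 2) (Subgroup.zpow_mem cl hT _)
    · -- Euclidean step
      have hc : M.1 1 0 ≠ 0 := fun h => hk0 (by rw [← hk, h]; rfl)
      set a := M.1 0 0 with ha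
      set c := M.1 1 0 with hcc
      set q := a / c with hq
      set N := ModularGroup.S * (ModularGroup.T ^ (-q) * M) with hN
      have hNc : N.1 1 0 = a % c := by
        rw [hN]
        simp only [Matrix.SpecialLinearGroup.coe_mul, coe_T_zpow, coe_S]
        rw [show (M : Matrix (Fin 2) (Fin 2) ℤ) = !![M.1 0 0, M.1 0 1; M.1 1 0, M.1 1 1] from
          (Matrix.etaExpand_eq M.1).symm]
        rw [Matrix.mul_fin_two, Matrix.mul_fin_two]
        norm_num [Int.emod_def]
        ring
      have hlt : (N.1 1 0).natAbs < k := by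
        rw [hNc]
        have h1 : 0 ≤ a % c := Int.emod_nonneg a hc
        have h2 : a % c < |c| := Int.emod_lt_abs a hc
        rw [Int.abs_eq_natAbs] at h2
        omega
      have hNcl : N ∈ cl := IH _ hlt N rfl
      have : M = ModularGroup.T ^ q * (ModularGroup.S⁻¹ * N) := by
        rw [hN]
        group
      rw [this]
      exact mul_mem (Subgroup.zpow_mem cl hT _) (mul_mem (inv_mem hS) hNcl)

end ConjHyper

/-! ### Möbius action on irrational numbers -/

abbrev Irr := {x : ℝ // Irrational x}

lemma ratCast_not_irrational (q : ℚ) : ¬ Irrational (q : ℝ) := Rat.not_irrational q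

lemma denom_ne {c d : ℤ} (h : ¬(c = 0 ∧ d = 0)) {x : ℝ} (hx : Irrational x) :
    (c : ℝ) * x + (d : ℝ) ≠ 0 := by
  rcases eq_or_ne c 0 with rfl | hc
  · have hd : d ≠ 0 := fun hd => h ⟨rfl, hd⟩
    simpa using hd
  · intro h0
    have hcr : (c : ℝ) ≠ 0 := Int.cast_ne_zero.mpr hc
    have : x = ((((-d : ℚ)) / (c : ℚ) : ℚ) : ℝ) := by
      push_cast
      field_simp at h0 ⊢
      linarith
    exact Rat.not_irrational _ (this ▸ hx)

lemma irrational_moebius {a b c d : ℤ} (hdet : a * d - b * c = 1) {x : ℝ} (hx : Irrational x) :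
    Irrational (((a : ℝ) * x + b) / ((c : ℝ) * x + d)) := by
  have hden : (c : ℝ) * x + (d : ℝ) ≠ 0 := by
    apply denom_ne _ hx
    rintro ⟨rfl, rfl⟩
    simp at hdet
  rintro ⟨q, hq⟩
  have hq' : (q : ℝ) * ((c : ℝ) * x + d) = (a : ℝ) * x + b := by
    rw [hq]; exact div_mul_cancel₀ _ hden
  have key : ((a : ℝ) - q * c) * x = q * d - b := by ring_nf; ring_nf at hq'; linarith
  rcases eq_or_ne ((a : ℝ) - q * c) 0 with h0 | h0
  · -- then a = qc, b = qd, det = 0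
    have h1 : (a : ℝ) = q * c := by linarith
    have h2 : (b : ℝ) = q * d := by rw [h0] at key; simp at key; linarith
    have : ((a : ℝ) * d - b * c) = 0 := by rw [h1, h2]; ring
    rw [show ((a:ℝ) * d - b * c) = ((a * d - b * c : ℤ) : ℝ) by push_cast; ring, hdet] at this
    norm_num at this
  · have hx' : x = ((q * d - b) / (a - q * c) : ℚ) := by
      push_cast
      rw [eq_div_iff (by exact_mod_cast h0), mul_comm]
      exact_mod_cast key
    exact Rat.not_irrational _ (hx' ▸ hx)

/-- The Möbius action of `SL(2,ℤ)` on irrational numbers. -/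
noncomputable def msmul (g : SL2Z) (x : Irr) : Irr :=
  ⟨((g.1 0 0 : ℝ) * x.1 + g.1 0 1) / ((g.1 1 0 : ℝ) * x.1 + g.1 1 1),
    irrational_moebius (by have := g.2; rw [Matrix.det_fin_two] at this; linarith) x.2⟩

lemma msmul_denom_ne (g : SL2Z) (x : Irr) : ((g.1 1 0 : ℝ) * x.1 + g.1 1 1) ≠ 0 := by
  apply denom_ne _ x.2
  rintro ⟨h1, h2⟩
  have := g.2
  rw [Matrix.det_fin_two, h1, h2] at this
  simp at this

lemma msmul_one (x : Irr) : msmul 1 x = x := by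
  apply Subtype.ext
  simp [msmul]

lemma msmul_mul (g h : SL2Z) (x : Irr) : msmul (g * h) x = msmul g (msmul h x) := by
  apply Subtype.ext
  have hdh := msmul_denom_ne h x
  have hdg := msmul_denom_ne g (msmul h x)
  have hdgh := msmul_denom_ne (g * h) x
  have e : ∀ i j : Fin 2, ((g*h).1 i j : ℝ) = g.1 i 0 * h.1 0 j + g.1 i 1 * h.1 1 j := by
    intro i j
    rw [Matrix.SpecialLinearGroup.coe_mul, Matrix.mul_apply, Fin.sum_univ_two]
    push_cast; ring
  simp only [msmul] at hdg ⊢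
  rw [e, e] at hdgh
  rw [e, e, e, e]
  rw [div_eq_div_iff hdgh hdg]
  field_simp
  ring

noncomputable instance : MulAction SL2Z Irr where
  smul := msmul
  one_smul := msmul_one
  mul_smul := msmul_mul

lemma sl_smul_def (g : SL2Z) (x : Irr) : g • x = msmul g x := rfl

/-- The action of `SL(2,ℤ)` on irrationals as a homomorphism to permutations. -/
noncomputable def slPermHom : SL2Z →* Equiv.Perm Irr := MulAction.toPermHom SL2Z Irr

lemma neg_one_smul_irr (x : Irr) : msmul (-1 : SL2Z) x = x := by
  apply Subtype.ext
  have h : ∀ i j : Fin 2, (((-1 : SL2Z).1 i j : ℤ) : ℝ) = ((-1 : Matrix (Fin 2) (Fin 2) ℤ) i j : ℝ) := by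
    intro i j; rfl
  show ((((-1:SL2Z).1 0 0 : ℤ) : ℝ) * x.1 + ((-1:SL2Z).1 0 1 : ℤ)) / _ = x.1
  have h00 : ((-1:SL2Z).1 0 0 : ℤ) = -1 := by simp
  have h01 : ((-1:SL2Z).1 0 1 : ℤ) = 0 := by simp
  have h10 : ((-1:SL2Z).1 1 0 : ℤ) = 0 := by simp
  have h11 : ((-1:SL2Z).1 1 1 : ℤ) = -1 := by simp
  rw [h00, h01, h10, h11]
  push_cast
  have hx : x.1 ≠ 0 := x.2.ne_zero
  field_simp
  ring

lemma pmOne_le_ker : pmOne ≤ slPermHom.ker := by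
  intro g hg
  obtain ⟨n, rfl⟩ := hg
  rw [MonoidHom.mem_ker, map_zpow]
  have h1 : slPermHom (-1 : SL2Z) = 1 := by
    ext x
    exact congrArg Subtype.val (neg_one_smul_irr x)
  rw [h1, _root_.one_zpow]

/-- The action of `PSL(2,ℤ)` on irrationals. -/
noncomputable def pslPermHom : PSL2Z →* Equiv.Perm Irr :=
  QuotientGroup.lift pmOne slPermHom pmOne_le_ker

noncomputable instance : MulAction PSL2Z Irr := MulAction.compHom Irr pslPermHom

lemma psl_smul_xi (g : SL2Z) (x : Irr) : (xi g) • x = msmul g x := rfl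

/-! ### Basic relations in `PSL(2,ℤ)` -/

lemma Sp_sq : Sp ^ 2 = 1 := by
  have : Sp ^ 2 = xi (ModularGroup.S ^ 2) := by
    rw [map_pow]; rfl
  rw [this, ConjHyper.Ssq]
  rw [show xi (-1 : SL2Z) = 1 from (QuotientGroup.eq_one_iff _).mpr ⟨1, by simp⟩]

def STm : SL2Z := ModularGroup.S * ModularGroup.T

lemma STm_coe : (STm.1 : Matrix (Fin 2) (Fin 2) ℤ) = !![0, -1; 1, 1] := by
  show (ModularGroup.S * ModularGroup.T).1 = _
  rw [Matrix.SpecialLinearGroup.coe_mul, ModularGroup.coe_S, ModularGroup.coe_T,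
    Matrix.mul_fin_two]
  norm_num

lemma STm_sq_coe : ((STm ^ 2).1 : Matrix (Fin 2) (Fin 2) ℤ) = !![-1, -1; 1, 0] := by
  rw [pow_two, Matrix.SpecialLinearGroup.coe_mul, STm_coe, Matrix.mul_fin_two]
  norm_num

lemma STm_cube : STm ^ 3 = (-1 : SL2Z) := by
  ext i j
  rw [show (STm ^ 3) = STm ^ 2 * STm from by group, Matrix.SpecialLinearGroup.coe_mul,
    STm_sq_coe, STm_coe, Matrix.mul_fin_two]
  fin_cases i <;> fin_cases j <;> simp

lemma SpTp_eq : Sp * Tp = xi STm := by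
  rw [STm, _root_.map_mul]; rfl

lemma SpTp_cube : (Sp * Tp) ^ 3 = 1 := by
  rw [SpTp_eq, ← map_pow, STm_cube]
  exact (QuotientGroup.eq_one_iff _).mpr ⟨1, by simp⟩

lemma psl_closure : Subgroup.closure ({Sp, Tp} : Set PSL2Z) = ⊤ := by
  have hsurj : Function.Surjective xi := QuotientGroup.mk'_surjective pmOne
  have : Subgroup.map xi (Subgroup.closure ({ModularGroup.S, ModularGroup.T} : Set SL2Z)) =
      Subgroup.closure (xi '' {ModularGroup.S, ModularGroup.T}) :=
    MonoidHom.map_closure xi _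
  rw [ConjHyper.SL2Z_closure_ST] at this
  rw [← Subgroup.map_top_of_surjective xi hsurj, this, Set.image_insert_eq, Set.image_singleton]
  rfl

lemma psl_closure' : Subgroup.closure ({Sp * Tp, Sp} : Set PSL2Z) = ⊤ := by
  rw [eq_top_iff, ← psl_closure, Subgroup.closure_le]
  rintro x (rfl | rfl)
  · exact Subgroup.subset_closure (by simp)
  · have h1 : Sp ∈ Subgroup.closure ({Sp * Tp, Sp} : Set PSL2Z) :=
      Subgroup.subset_closure (by simp)
    have h2 : Sp * Tp ∈ Subgroup.closure ({Sp * Tp, Sp} : Set PSL2Z) :=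
      Subgroup.subset_closure (by simp)
    have : Sp * (Sp * Tp) = Tp := by
      rw [← mul_assoc, ← pow_two, Sp_sq, one_mul]
    have h3 := mul_mem h1 h2
    rwa [this] at h3

/-! ### The free product `C3 * C2` and its isomorphism with `PSL(2,ℤ)` -/

/-- A homomorphism from `ZMod n` (multiplicatively) determined by an element whose `n`-th
power is `1`. -/
def zmodHom {G : Type*} [Group G] (n : ℕ) [NeZero n] (g : G) (h : g ^ n = 1) :
    Multiplicative (ZMod n) →* G where
  toFun x := g ^ (Multiplicative.toAdd x).val
  map_one' := by simp
  map_mul' a b := by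
    show g ^ (Multiplicative.toAdd a + Multiplicative.toAdd b).val = _
    rw [ZMod.val_add, ← pow_add]
    have hdvd : orderOf g ∣ n := orderOf_dvd_of_pow_eq_one h
    exact pow_eq_pow_iff_modEq.mpr (((Nat.mod_modEq _ n)).of_dvd hdvd)

lemma zmodHom_apply {G : Type*} [Group G] (n : ℕ) [NeZero n] (g : G) (h : g ^ n = 1)
    (x : ZMod n) : zmodHom n g h (Multiplicative.ofAdd x) = g ^ x.val := rfl

/-- The index type for the free product: `false ↦ C3`, `true ↦ C2`. -/
def HH : Bool → Type := fun b =>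
  Bool.rec (Multiplicative (ZMod 3)) (Multiplicative (ZMod 2)) b

instance (b : Bool) : Group (HH b) :=
  Bool.rec (inferInstanceAs (Group (Multiplicative (ZMod 3))))
    (inferInstanceAs (Group (Multiplicative (ZMod 2)))) b

/-- The homomorphisms into `PSL(2,ℤ)`. -/
noncomputable def ff : ∀ b : Bool, HH b →* PSL2Z := fun b =>
  Bool.rec (motive := fun b => HH b →* PSL2Z)
    (zmodHom 3 (Sp * Tp) SpTp_cube) (zmodHom 2 Sp Sp_sq) b

/-- The lifted homomorphism from the free product. -/
noncomputable def theta : Monoid.CoprodI HH →* PSL2Z := Monoid.CoprodI.lift ff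

lemma Sp_eq_xi : Sp = xi ModularGroup.S := rfl

lemma msmul_val_of (g : SL2Z) (a b c d : ℤ) (hg : g.1 = !![a, b; c, d]) (x : Irr) :
    (msmul g x).1 = ((a : ℝ) * x.1 + b) / ((c : ℝ) * x.1 + d) := by
  simp [msmul, hg]

/-- The ping-pong sets: negative and positive irrationals. -/
def XX : Bool → Set Irr := fun b => Bool.rec {x : Irr | x.1 < 0} {x : Irr | 0 < x.1} b

lemma theta_of3 :
    theta (Monoid.CoprodI.of (i := false) (Multiplicative.ofAdd (1 : ZMod 3))) = Sp * Tp := by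
  refine (Monoid.CoprodI.lift_of ff _).trans ?_
  show (Sp * Tp) ^ (Multiplicative.toAdd (Multiplicative.ofAdd (1 : ZMod 3))).val = _
  rw [toAdd_ofAdd, ZMod.val_one, pow_one]

lemma theta_of2 :
    theta (Monoid.CoprodI.of (i := true) (Multiplicative.ofAdd (1 : ZMod 2))) = Sp := by
  refine (Monoid.CoprodI.lift_of ff _).trans ?_
  show Sp ^ (Multiplicative.toAdd (Multiplicative.ofAdd (1 : ZMod 2))).val = _
  rw [toAdd_ofAdd, ZMod.val_one, pow_one]

lemma theta_surjective : Function.Surjective theta := by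
  rw [← MonoidHom.range_eq_top]
  rw [eq_top_iff, ← psl_closure', Subgroup.closure_le]
  rintro x (rfl | rfl)
  · exact ⟨_, theta_of3⟩
  · exact ⟨_, theta_of2⟩

lemma theta_injective : Function.Injective theta := by
  apply Monoid.CoprodI.lift_injective_of_ping_pong ff
    (Or.inr ⟨false, by
      show 3 ≤ Cardinal.mk (Multiplicative (ZMod 3))
      rw [Cardinal.mk_fintype]
      norm_num⟩) XX
  · -- nonempty
    intro b
    cases b
    · exact ⟨⟨-Real.sqrt 2, irrational_sqrt_two.neg⟩, by
        show -Real.sqrt 2 < 0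
        have := Real.sqrt_pos.mpr (by norm_num : (0:ℝ) < 2)
        linarith⟩
    · exact ⟨⟨Real.sqrt 2, irrational_sqrt_two⟩, Real.sqrt_pos.mpr (by norm_num : (0:ℝ) < 2)⟩
  · -- disjoint
    intro i j hij
    cases i <;> cases j
    · exact absurd rfl hij
    · exact Set.disjoint_left.mpr fun {x} (hx : x.1 < 0) (hx' : (0:ℝ) < x.1) =>
        absurd hx' (not_lt.mpr hx.le)
    · exact Set.disjoint_left.mpr fun {x} (hx : (0:ℝ) < x.1) (hx' : x.1 < 0) =>
        absurd hx (not_lt.mpr hx'.le)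
    · exact absurd rfl hij
  · -- ping pong
    intro i j hij
    intro h hne
    cases i
    · -- i = false : C3, (ST)^v maps positives into negatives
      have hj : j = true := by
        cases j
        · exact absurd rfl hij
        · rfl
      subst hj
      set v := Multiplicative.toAdd (h : Multiplicative (ZMod 3)) with hv
      have hval : v.val = 1 ∨ v.val = 2 := by
        have h1 := ZMod.val_lt v
        have h2 : v.val ≠ 0 := by
          intro h0'
          have h0 := (ZMod.val_eq_zero (n := 3) v).mp h0'
          exact hne (by
            have : h = Multiplicative.ofAdd v := rfl
            rw [this, h0]; rfl)
        omega
      have hffh : ff false h = (Sp * Tp) ^ v.val := rfl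
      intro y hy
      obtain ⟨x, hx, rfl⟩ := hy
      have hxpos : (0:ℝ) < x.1 := hx
      rcases hval with h1 | h2
      · show ((ff false h) • x).1 < 0
        rw [hffh, h1, pow_one, SpTp_eq, psl_smul_xi,
          msmul_val_of STm 0 (-1) 1 1 STm_coe]
        push_cast
        apply div_neg_of_neg_of_pos <;> linarith
      · show ((ff false h) • x).1 < 0
        rw [hffh, h2, SpTp_eq, ← map_pow, psl_smul_xi,
          msmul_val_of (STm ^ 2) (-1) (-1) 1 0 STm_sq_coe]
        push_cast
        apply div_neg_of_neg_of_pos <;> linarith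
    · -- i = true : C2, S maps negatives into positives
      have hj : j = false := by
        cases j
        · rfl
        · exact absurd rfl hij
      subst hj
      set v := Multiplicative.toAdd (h : Multiplicative (ZMod 2)) with hv
      have hval : v.val = 1 := by
        have h1 := ZMod.val_lt v
        have h2 : v.val ≠ 0 := by
          intro h0'
          have h0 := (ZMod.val_eq_zero (n := 2) v).mp h0'
          exact hne (by
            have : h = Multiplicative.ofAdd v := rfl
            rw [this, h0]; rfl)
        omega
      have hffh : ff true h = Sp ^ v.val := rfl
      intro y hy
      obtain ⟨x, hx, rfl⟩ := hy
      have hxneg : x.1 < 0 := hx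
      show (0:ℝ) < ((ff true h) • x).1
      rw [hffh, hval, pow_one, Sp_eq_xi, psl_smul_xi,
        msmul_val_of ModularGroup.S 0 (-1) 1 0 ModularGroup.coe_S]
      push_cast
      rw [one_mul, add_zero]
      exact div_pos_of_neg_of_neg (by norm_num) hxneg

/-- `PSL(2,ℤ)` is isomorphic to the free product `C3 * C2`. -/
noncomputable def thetaIso : Monoid.CoprodI HH ≃* PSL2Z :=
  MulEquiv.ofBijective theta ⟨theta_injective, theta_surjective⟩

/-- The universal property: any pair `(σ, α)` with `σ³ = 1`, `α² = 1` in a group `G`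
determines a homomorphism from `PSL(2,ℤ)`. -/
noncomputable def pslLift {G : Type*} [Group G] (σ α : G) (h3 : σ ^ 3 = 1) (h2 : α ^ 2 = 1) :
    PSL2Z →* G :=
  (Monoid.CoprodI.lift (fun b => Bool.rec (motive := fun b => HH b →* G)
    (zmodHom 3 σ h3) (zmodHom 2 α h2) b)).comp thetaIso.symm.toMonoidHom

lemma pslLift_ST {G : Type*} [Group G] (σ α : G) (h3 : σ ^ 3 = 1) (h2 : α ^ 2 = 1) :
    pslLift σ α h3 h2 (Sp * Tp) = σ := by
  have h : thetaIso.symm (Sp * Tp) =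
      Monoid.CoprodI.of (i := false) (Multiplicative.ofAdd (1 : ZMod 3)) := by
    apply thetaIso.injective
    rw [MulEquiv.apply_symm_apply]
    exact (theta_of3).symm
  show (Monoid.CoprodI.lift _) (thetaIso.symm (Sp * Tp)) = σ
  rw [h]; refine (Monoid.CoprodI.lift_of _ _).trans ?_
  show σ ^ (Multiplicative.toAdd (Multiplicative.ofAdd (1 : ZMod 3))).val = σ
  rw [toAdd_ofAdd, ZMod.val_one, pow_one]

lemma pslLift_S {G : Type*} [Group G] (σ α : G) (h3 : σ ^ 3 = 1) (h2 : α ^ 2 = 1) :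
    pslLift σ α h3 h2 Sp = α := by
  have h : thetaIso.symm Sp =
      Monoid.CoprodI.of (i := true) (Multiplicative.ofAdd (1 : ZMod 2)) := by
    apply thetaIso.injective
    rw [MulEquiv.apply_symm_apply]
    exact (theta_of2).symm
  show (Monoid.CoprodI.lift _) (thetaIso.symm Sp) = α
  rw [h]; refine (Monoid.CoprodI.lift_of _ _).trans ?_
  show α ^ (Multiplicative.toAdd (Multiplicative.ofAdd (1 : ZMod 2))).val = α
  rw [toAdd_ofAdd, ZMod.val_one, pow_one]

/-! ### The hypermap attached to a finite-index subgroup -/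

variable {n : ℕ}

/-- The permutation action of `PSL(2,ℤ)` on `Fin n` obtained from the left action on the
coset space through a bijection `e`. -/
def cosetPerm {Γ : Subgroup PSL2Z} (e : Fin n ≃ PSL2Z ⧸ Γ) : PSL2Z →* Equiv.Perm (Fin n) where
  toFun g := (e.trans (MulAction.toPerm g)).trans e.symm
  map_one' := by ext x; simp
  map_mul' g h := by
    ext x
    simp [mul_smul]

lemma cosetPerm_apply {Γ : Subgroup PSL2Z} (e : Fin n ≃ PSL2Z ⧸ Γ) (g : PSL2Z) (x : Fin n) :
    cosetPerm e g x = e.symm (g • e x) := rfl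

noncomputable def eOf (hn : 1 ≤ n) (Γ : Subgroup PSL2Z) (hΓ : Γ.index = n) :
    Fin n ≃ PSL2Z ⧸ Γ := by
  have hcard : Nat.card (PSL2Z ⧸ Γ) = n := by rw [← Subgroup.index_eq_card, hΓ]
  have : Finite (PSL2Z ⧸ Γ) := Nat.finite_of_card_ne_zero (by omega)
  exact (Finite.equivFinOfCardEq hcard).symm

/-- The hypermap attached to a subgroup `Γ` and a bijection `e` with the coset space. -/
def hmMk (Γ : Subgroup PSL2Z) (e : Fin n ≃ PSL2Z ⧸ Γ) : Hypermap n where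
  sigma := cosetPerm e (Sp * Tp)
  alpha := cosetPerm e Sp
  sigma_cube := by rw [← _root_.map_pow, SpTp_cube, _root_.map_one]
  alpha_sq := by rw [← _root_.map_pow, Sp_sq, _root_.map_one]
  trans := by
    intro x y
    obtain ⟨g, hg⟩ := MulAction.exists_smul_eq PSL2Z (e x) (e y)
    have hmem : cosetPerm e g ∈ Subgroup.map (cosetPerm e)
        (Subgroup.closure ({Sp * Tp, Sp} : Set PSL2Z)) :=
      ⟨g, by rw [psl_closure']; trivial, rfl⟩
    rw [MonoidHom.map_closure, Set.image_insert_eq, Set.image_singleton] at hmem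
    exact ⟨cosetPerm e g, hmem, by rw [cosetPerm_apply, hg, Equiv.symm_apply_apply]⟩

noncomputable def hmOf (hn : 1 ≤ n) (Γ : Subgroup PSL2Z) (hΓ : Γ.index = n) : Hypermap n :=
  hmMk Γ (eOf hn Γ hΓ)

/-- Equivariant bijections of coset spaces give equivalent hypermaps. -/
lemma hmMk_equiv {Γ Γ' : Subgroup PSL2Z} (e : Fin n ≃ PSL2Z ⧸ Γ) (e' : Fin n ≃ PSL2Z ⧸ Γ')
    (δ : (PSL2Z ⧸ Γ) ≃ (PSL2Z ⧸ Γ')) (hδ : ∀ (g : PSL2Z) q, δ (g • q) = g • δ q) :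
    HypermapEquiv (hmMk Γ e) (hmMk Γ' e') := by
  refine ⟨(e.trans δ).trans e'.symm, fun x => ?_, fun x => ?_⟩ <;>
    simp [hmMk, cosetPerm_apply, hδ]

/-- Conjugate subgroups give equivariant bijections of coset spaces. -/
def conjQuotEquiv {Γ Γ' : Subgroup PSL2Z} (h : PSL2Z)
    (hh : Subgroup.map (MulAut.conj h).toMonoidHom Γ = Γ') :
    (PSL2Z ⧸ Γ) ≃ (PSL2Z ⧸ Γ') where
  toFun := Quotient.map' (fun g => g * h⁻¹) (by
    intro a b hab
    rw [QuotientGroup.leftRel_apply] at hab ⊢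
    have : (a * h⁻¹)⁻¹ * (b * h⁻¹) = h * (a⁻¹ * b) * h⁻¹ := by group
    rw [this, ← hh]
    exact ⟨a⁻¹ * b, hab, rfl⟩)
  invFun := Quotient.map' (fun g => g * h) (by
    intro a b hab
    rw [QuotientGroup.leftRel_apply] at hab ⊢
    have h2 : a⁻¹ * b ∈ Subgroup.map (MulAut.conj h).toMonoidHom Γ := hh.symm ▸ hab
    obtain ⟨y, hy, hyy⟩ := h2
    have : (a * h)⁻¹ * (b * h) = h⁻¹ * (a⁻¹ * b) * h := by group
    rw [this, ← hyy]
    have h3 : h⁻¹ * ((MulAut.conj h).toMonoidHom y) * h = y := by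
      simp only [MulEquiv.coe_toMonoidHom, MulAut.conj_apply]
      group
    rw [h3]
    exact hy)
  left_inv := by
    intro q
    induction q using Quotient.inductionOn' with
    | h g => simp [Quotient.map'_mk'']
  right_inv := by
    intro q
    induction q using Quotient.inductionOn' with
    | h g => simp [Quotient.map'_mk'']

lemma conjQuotEquiv_mk {Γ Γ' : Subgroup PSL2Z} (h : PSL2Z)
    (hh : Subgroup.map (MulAut.conj h).toMonoidHom Γ = Γ') (g : PSL2Z) :
    conjQuotEquiv h hh (Quotient.mk'' g) = Quotient.mk'' (g * h⁻¹) := rfl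

lemma conjQuotEquiv_equivariant {Γ Γ' : Subgroup PSL2Z} (h : PSL2Z)
    (hh : Subgroup.map (MulAut.conj h).toMonoidHom Γ = Γ') (g : PSL2Z) (q : PSL2Z ⧸ Γ) :
    conjQuotEquiv h hh (g • q) = g • conjQuotEquiv h hh q := by
  induction q using Quotient.inductionOn' with
  | h k =>
    have e1 : g • (QuotientGroup.mk k : PSL2Z ⧸ Γ) = QuotientGroup.mk (g * k) := rfl
    have e2 : g • (QuotientGroup.mk (k * h⁻¹) : PSL2Z ⧸ Γ') = QuotientGroup.mk (g * (k * h⁻¹)) :=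
      rfl
    show conjQuotEquiv h hh (g • (QuotientGroup.mk k : PSL2Z ⧸ Γ)) = _
    rw [e1]
    rw [show (QuotientGroup.mk (g * k) : PSL2Z ⧸ Γ) = Quotient.mk'' (g * k) from rfl,
      conjQuotEquiv_mk]
    rw [show conjQuotEquiv h hh (Quotient.mk'' k) = Quotient.mk'' (k * h⁻¹) from
      conjQuotEquiv_mk h hh k]
    rw [show (Quotient.mk'' (k * h⁻¹) : PSL2Z ⧸ Γ') = QuotientGroup.mk (k * h⁻¹) from rfl, e2,
      show (Quotient.mk'' (g * k * h⁻¹) : PSL2Z ⧸ Γ') = QuotientGroup.mk (g * k * h⁻¹) from rfl,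
      mul_assoc]

/-! ### From hypermaps to subgroups -/

/-- The stabilizer of a point under a permutation representation. -/
def stabOf (φ : PSL2Z →* Equiv.Perm (Fin n)) (p : Fin n) : Subgroup PSL2Z where
  carrier := {g | φ g p = p}
  one_mem' := by simp
  mul_mem' := by
    intro a b ha hb
    show φ (a * b) p = p
    rw [_root_.map_mul]
    show φ a (φ b p) = p
    rw [hb, ha]
  inv_mem' := by
    intro a ha
    show φ a⁻¹ p = p
    rw [_root_.map_inv]
    exact (Equiv.Perm.inv_eq_iff_eq).mpr ha.symm

lemma mem_stabOf {φ : PSL2Z →* Equiv.Perm (Fin n)} {p : Fin n} {g : PSL2Z} :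
    g ∈ stabOf φ p ↔ φ g p = p := Iff.rfl

/-- The homomorphism attached to a hypermap by the presentation of `PSL(2,ℤ)`. -/
noncomputable def phiOf (M : Hypermap n) : PSL2Z →* Equiv.Perm (Fin n) :=
  pslLift M.sigma M.alpha M.sigma_cube M.alpha_sq

lemma phiOf_ST (M : Hypermap n) : phiOf M (Sp * Tp) = M.sigma := pslLift_ST _ _ _ _
lemma phiOf_S (M : Hypermap n) : phiOf M Sp = M.alpha := pslLift_S _ _ _ _

lemma phiOf_transitive (M : Hypermap n) (p q : Fin n) : ∃ g : PSL2Z, phiOf M g p = q := by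
  obtain ⟨π, hπ, hπpq⟩ := M.trans p q
  have hle : Subgroup.closure ({M.sigma, M.alpha} : Set (Equiv.Perm (Fin n))) ≤
      (phiOf M).range := by
    rw [Subgroup.closure_le]
    rintro x (rfl | rfl)
    · exact ⟨Sp * Tp, phiOf_ST M⟩
    · exact ⟨Sp, phiOf_S M⟩
  obtain ⟨g, hg⟩ := hle hπ
  exact ⟨g, by rw [hg]; exact hπpq⟩

/-- The coset space of the stabilizer is in equivariant bijection with `Fin n`. -/
noncomputable def stabQuotEquiv (M : Hypermap n) (p : Fin n) :
    (PSL2Z ⧸ stabOf (phiOf M) p) ≃ Fin n := by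
  apply Equiv.ofBijective (fun q => Quotient.liftOn' q (fun g => phiOf M g p) ?_)
  constructor
  · intro a b
    induction a using Quotient.inductionOn' with
    | h x =>
    induction b using Quotient.inductionOn' with
    | h y =>
      intro hxy
      simp only [Quotient.liftOn'_mk''] at hxy
      apply Quotient.sound'
      rw [QuotientGroup.leftRel_apply]
      rw [mem_stabOf, _root_.map_mul]
      show phiOf M x⁻¹ (phiOf M y p) = p
      rw [← hxy, _root_.map_inv]
      simp
  · intro q
    obtain ⟨g, hg⟩ := phiOf_transitive M p q
    exact ⟨Quotient.mk'' g, hg⟩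
  · -- well-definedness
    intro a b hab
    rw [QuotientGroup.leftRel_apply] at hab
    rw [mem_stabOf, _root_.map_mul] at hab
    replace hab : phiOf M a⁻¹ (phiOf M b p) = p := hab
    have := congrArg (phiOf M a) hab
    rw [← Equiv.Perm.mul_apply, ← _root_.map_mul, mul_inv_cancel, _root_.map_one] at this
    simpa using this.symm

lemma stabQuotEquiv_mk (M : Hypermap n) (p : Fin n) (g : PSL2Z) :
    stabQuotEquiv M p (Quotient.mk'' g) = phiOf M g p := rfl

lemma stabQuotEquiv_equivariant (M : Hypermap n) (p : Fin n) (g : PSL2Z)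
    (q : PSL2Z ⧸ stabOf (phiOf M) p) :
    stabQuotEquiv M p (g • q) = phiOf M g (stabQuotEquiv M p q) := by
  induction q using Quotient.inductionOn' with
  | h k =>
    show stabQuotEquiv M p (g • (QuotientGroup.mk k : PSL2Z ⧸ stabOf (phiOf M) p)) = _
    have e1 : g • (QuotientGroup.mk k : PSL2Z ⧸ stabOf (phiOf M) p) =
        QuotientGroup.mk (g * k) := rfl
    rw [e1]
    show phiOf M (g * k) p = _
    rw [_root_.map_mul]
    rfl

lemma stabOf_index (M : Hypermap n) (p : Fin n) : (stabOf (phiOf M) p).index = n := by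
  rw [Subgroup.index_eq_card, Nat.card_congr (stabQuotEquiv M p), Nat.card_eq_fintype_card,
    Fintype.card_fin]

noncomputable def grpOf (hn : 1 ≤ n) (M : Hypermap n) : Subgroup PSL2Z :=
  stabOf (phiOf M) ⟨0, hn⟩

/-! ### Round trips -/

lemma phiOf_hmMk {Γ : Subgroup PSL2Z} (e : Fin n ≃ PSL2Z ⧸ Γ) :
    phiOf (hmMk Γ e) = cosetPerm e := by
  apply MonoidHom.eq_of_eqOn_dense psl_closure'
  rintro x (rfl | rfl)
  · exact phiOf_ST _
  · exact phiOf_S _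

lemma stabOf_cosetPerm_conj {Γ : Subgroup PSL2Z} (e : Fin n ≃ PSL2Z ⧸ Γ) (p : Fin n)
    (k : PSL2Z) (hk : e p = QuotientGroup.mk k) :
    Subgroup.map (MulAut.conj k⁻¹).toMonoidHom (stabOf (cosetPerm e) p) = Γ := by
  ext x
  constructor
  · rintro ⟨y, hy, rfl⟩
    replace hy : cosetPerm e y p = p := hy
    rw [cosetPerm_apply, Equiv.symm_apply_eq, hk] at hy
    have hy' : QuotientGroup.mk (y * k) = (QuotientGroup.mk k : PSL2Z ⧸ Γ) := by
      rw [← hy]; rfl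
    rw [QuotientGroup.eq] at hy'
    show k⁻¹ * y * k⁻¹⁻¹ ∈ Γ
    rw [inv_inv]
    have : k⁻¹ * y * k = ((y * k)⁻¹ * k)⁻¹ := by group
    rw [this]
    exact inv_mem hy'
  · intro hx
    refine ⟨k * x * k⁻¹, ?_, by show k⁻¹ * (k * x * k⁻¹) * k⁻¹⁻¹ = x; group⟩
    show cosetPerm e (k * x * k⁻¹) p = p
    rw [cosetPerm_apply, Equiv.symm_apply_eq, hk]
    have : (k * x * k⁻¹) • (QuotientGroup.mk k : PSL2Z ⧸ Γ) = QuotientGroup.mk (k * x) := by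
      show QuotientGroup.mk (k * x * k⁻¹ * k) = _
      congr 1
      group
    rw [this, QuotientGroup.eq]
    have : (k * x)⁻¹ * k = x⁻¹ := by group
    rw [this]
    exact inv_mem hx

lemma roundtrip_subgroup (hn : 1 ≤ n) (Γ : Subgroup PSL2Z) (hΓ : Γ.index = n) :
    SubgroupConj (grpOf hn (hmOf hn Γ hΓ)) Γ := by
  obtain ⟨k, hk⟩ := Quotient.exists_rep ((eOf hn Γ hΓ) ⟨0, hn⟩)
  refine ⟨k⁻¹, ?_⟩
  show Subgroup.map (MulAut.conj k⁻¹).toMonoidHom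
    (stabOf (phiOf (hmMk Γ (eOf hn Γ hΓ))) ⟨0, hn⟩) = Γ
  rw [phiOf_hmMk]
  exact stabOf_cosetPerm_conj (eOf hn Γ hΓ) ⟨0, hn⟩ k hk.symm

lemma roundtrip_hypermap (hn : 1 ≤ n) (M : Hypermap n) (h : (grpOf hn M).index = n) :
    HypermapEquiv (hmOf hn (grpOf hn M) h) M := by
  set e := eOf hn (grpOf hn M) h with he
  refine ⟨e.trans (stabQuotEquiv M ⟨0, hn⟩), fun x => ?_, fun x => ?_⟩
  · show stabQuotEquiv M ⟨0, hn⟩ (e (e.symm ((Sp * Tp) • e x))) = M.sigma _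
    rw [Equiv.apply_symm_apply]
    refine (stabQuotEquiv_equivariant M ⟨0, hn⟩ (Sp * Tp) (e x)).trans ?_
    rw [phiOf_ST]
    rfl
  · show stabQuotEquiv M ⟨0, hn⟩ (e (e.symm (Sp • e x))) = M.alpha _
    rw [Equiv.apply_symm_apply]
    refine (stabQuotEquiv_equivariant M ⟨0, hn⟩ Sp (e x)).trans ?_
    rw [phiOf_S]
    rfl

lemma stabOf_conj (φ : PSL2Z →* Equiv.Perm (Fin n)) (p : Fin n) (g : PSL2Z) :
    Subgroup.map (MulAut.conj g).toMonoidHom (stabOf φ p) = stabOf φ (φ g p) := by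
  ext x
  constructor
  · rintro ⟨y, hy, rfl⟩
    replace hy : φ y p = p := hy
    show φ (g * y * g⁻¹) (φ g p) = φ g p
    rw [_root_.map_mul, _root_.map_mul, _root_.map_inv]
    show φ g (φ y ((φ g)⁻¹ (φ g p))) = φ g p
    rw [show ∀ (e : Equiv.Perm (Fin n)) y, e⁻¹ (e y) = y from fun e y => e.symm_apply_apply y, hy]
  · intro hx
    rw [mem_stabOf] at hx
    refine ⟨g⁻¹ * x * g, ?_, by show g * (g⁻¹ * x * g) * g⁻¹ = x; group⟩
    show φ (g⁻¹ * x * g) p = p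
    rw [_root_.map_mul, _root_.map_mul, _root_.map_inv]
    show (φ g)⁻¹ (φ x (φ g p)) = p
    rw [hx, show ∀ (e : Equiv.Perm (Fin n)) y, e⁻¹ (e y) = y from fun e y => e.symm_apply_apply y]

lemma grpOf_conj (hn : 1 ≤ n) {M N : Hypermap n} (h : HypermapEquiv M N) :
    SubgroupConj (grpOf hn N) (grpOf hn M) := by
  obtain ⟨ψ, hσ, hα⟩ := h
  have hφN : phiOf N = ((MulAut.conj ψ).toMonoidHom).comp (phiOf M) := by
    apply MonoidHom.eq_of_eqOn_dense psl_closure'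
    rintro x (rfl | rfl)
    · rw [MonoidHom.comp_apply, phiOf_ST, phiOf_ST]
      refine Equiv.ext fun z => ?_
      show N.sigma z = ψ (M.sigma (ψ⁻¹ z))
      have h2 := hσ (ψ⁻¹ z)
      rw [show ∀ (e : Equiv.Perm (Fin n)) y, e (e⁻¹ y) = y from fun e y => e.apply_symm_apply y] at h2
      exact h2.symm
    · rw [MonoidHom.comp_apply, phiOf_S, phiOf_S]
      refine Equiv.ext fun z => ?_
      show N.alpha z = ψ (M.alpha (ψ⁻¹ z))
      have h2 := hα (ψ⁻¹ z)
      rw [show ∀ (e : Equiv.Perm (Fin n)) y, e (e⁻¹ y) = y from fun e y => e.apply_symm_apply y] at h2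
      exact h2.symm
  have hstab : grpOf hn N = stabOf (phiOf M) (ψ.symm ⟨0, hn⟩) := by
    ext g
    show phiOf N g ⟨0, hn⟩ = ⟨0, hn⟩ ↔ phiOf M g (ψ.symm ⟨0, hn⟩) = ψ.symm ⟨0, hn⟩
    rw [hφN]
    have h1 : ((MulAut.conj ψ).toMonoidHom.comp (phiOf M)) g ⟨0, hn⟩ =
        ψ (phiOf M g (ψ.symm ⟨0, hn⟩)) := rfl
    rw [h1, Equiv.apply_eq_iff_eq_symm_apply]
  obtain ⟨g0, hg0⟩ := phiOf_transitive M (ψ.symm ⟨0, hn⟩) ⟨0, hn⟩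
  refine ⟨g0, ?_⟩
  rw [hstab, stabOf_conj, hg0]
  rfl

lemma hmOf_conj (hn : 1 ≤ n) {Γ Γ' : Subgroup PSL2Z} (hΓ : Γ.index = n) (hΓ' : Γ'.index = n)
    (h : SubgroupConj Γ Γ') : HypermapEquiv (hmOf hn Γ hΓ) (hmOf hn Γ' hΓ') := by
  obtain ⟨g, hg⟩ := h
  exact hmMk_equiv (eOf hn Γ hΓ) (eOf hn Γ' hΓ') (conjQuotEquiv g hg)
    (conjQuotEquiv_equivariant g hg)

lemma grpOf_index (hn : 1 ≤ n) (M : Hypermap n) : (grpOf hn M).index = n :=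
  stabOf_index M ⟨0, hn⟩

/-- Forward map on quotients. -/
noncomputable def Fmap (hn : 1 ≤ n) :
    Quot (fun A B : {Γ : Subgroup PSL2Z // Γ.index = n} => SubgroupConj A.1 B.1) →
    Quot (fun M N : Hypermap n => HypermapEquiv M N) :=
  Quot.lift (fun A => Quot.mk _ (hmOf hn A.1 A.2))
    (fun A B h => Quot.sound (hmOf_conj hn A.2 B.2 h))

/-- Backward map on quotients. -/
noncomputable def Gmap (hn : 1 ≤ n) :
    Quot (fun M N : Hypermap n => HypermapEquiv M N) →
    Quot (fun A B : {Γ : Subgroup PSL2Z // Γ.index = n} => SubgroupConj A.1 B.1) :=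
  Quot.lift (fun M => Quot.mk _ (⟨grpOf hn M, grpOf_index hn M⟩ :
      {Γ : Subgroup PSL2Z // Γ.index = n}))
    (fun M N h => by
      apply Eq.symm
      exact Quot.sound (grpOf_conj hn h))

/-- Conjugacy classes of index-`n` subgroups of `PSL(2,ℤ)` are in bijection with
equivalence classes of hypermaps of size `n`, the bijection being induced by the
left-multiplication action of `ST` and `S` on the coset space. -/
theorem conj_classes_equiv_hypermaps (n : ℕ) (hn : 1 ≤ n) :
    ∃ f : Quot (fun A B : {Γ : Subgroup PSL2Z // Γ.index = n} => SubgroupConj A.1 B.1) ≃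
        Quot (fun M N : Hypermap n => HypermapEquiv M N),
      ∀ (Γ : Subgroup PSL2Z) (hΓ : Γ.index = n),
        ∃ (M : Hypermap n) (e : Fin n ≃ PSL2Z ⧸ Γ),
          f (Quot.mk _ ⟨Γ, hΓ⟩) = Quot.mk _ M ∧
          (∀ x, e (M.sigma x) = (Sp * Tp) • e x) ∧
          (∀ x, e (M.alpha x) = Sp • e x) := by
  refine ⟨⟨Fmap hn, Gmap hn, ?_, ?_⟩, ?_⟩
  · -- left inverse
    intro q
    induction q using Quot.ind with
    | mk A =>
      show Quot.mk _ ⟨grpOf hn (hmOf hn A.1 A.2), _⟩ = Quot.mk _ A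
      exact Quot.sound (roundtrip_subgroup hn A.1 A.2)
  · -- right inverse
    intro q
    induction q using Quot.ind with
    | mk M =>
      show Quot.mk _ (hmOf hn (grpOf hn M) _) = Quot.mk _ M
      exact Quot.sound (roundtrip_hypermap hn M _)
  · -- description of the map
    intro Γ hΓ
    refine ⟨hmOf hn Γ hΓ, eOf hn Γ hΓ, rfl, fun x => ?_, fun x => ?_⟩
    · show eOf hn Γ hΓ ((eOf hn Γ hΓ).symm ((Sp * Tp) • eOf hn Γ hΓ x)) = _
      rw [Equiv.apply_symm_apply]
    · show eOf hn Γ hΓ ((eOf hn Γ hΓ).symm (Sp • eOf hn Γ hΓ x)) = _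
      rw [Equiv.apply_symm_apply]
end

section
/- If Γ̄ is a finite-index subgroup of PSL(2,ℤ) of index n and of genus zero, then 6 divides n + 3·e₂(Γ̄) + 2·e₃(Γ̄), and writing n + 3·e₂(Γ̄) + 2·e₃(Γ̄) = 6k one has e₂(Γ̄) + e₃(Γ̄) ≤ k + 1. -/
open Matrix

section AuxCounting

open MulAction

lemma orbit_eq_singleton_of_fixed {G X : Type*} [Group G] [MulAction G X]
    (g : G) (x : X) (hx : g • x = x) :
    orbit (Subgroup.zpowers g) x = {x} := by
  apply Set.eq_singleton_iff_unique_mem.mpr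
  refine ⟨mem_orbit_self x, ?_⟩
  rintro y ⟨⟨h, m⟩, rfl⟩
  have hle : Subgroup.zpowers g ≤ stabilizer G x := by
    rw [Subgroup.zpowers_le]
    exact hx
  exact hle m

lemma fixed_of_orbit_eq_singleton {G X : Type*} [Group G] [MulAction G X]
    (g : G) (x : X) (hx : orbit (Subgroup.zpowers g) x = {x}) :
    g • x = x := by
  have : (⟨g, Subgroup.mem_zpowers g⟩ : Subgroup.zpowers g) • x ∈ orbit (Subgroup.zpowers g) x :=
    mem_orbit _ _
  rw [hx] at this
  simpa using this

lemma prime_order_count {G X : Type*} [Group G] [MulAction G X] [Finite X]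
    (g : G) {p : ℕ} (hp : p.Prime) (hg : orderOf g = p) :
    p * Nat.card (orbitRel.Quotient (Subgroup.zpowers g) X)
        + Nat.card {x : X // g • x = x}
      = Nat.card X + p * Nat.card {x : X // g • x = x} := by
  classical
  cases nonempty_fintype X
  set H := Subgroup.zpowers g with hH
  have hcardH : Nat.card H = p := by rw [Nat.card_zpowers, hg]
  haveI : Finite H := (Nat.card_pos_iff.mp (hcardH ▸ hp.pos)).2
  have horb_dvd : ∀ x : X, Nat.card (orbit H x) ∣ p := by
    intro x
    rw [Nat.card_congr (orbitEquivQuotientStabilizer H x), ← hcardH]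
    exact Subgroup.index_dvd_card _
  have horb_cases : ∀ x : X, Nat.card (orbit H x) = 1 ∨ Nat.card (orbit H x) = p := fun x =>
    (Nat.Prime.eq_one_or_self_of_dvd hp _ (horb_dvd x))
  have hfix_iff : ∀ x : X, g • x = x ↔ Nat.card (orbit H x) = 1 := by
    intro x
    constructor
    · intro h
      rw [orbit_eq_singleton_of_fixed g x h]
      simp
    · intro h
      apply fixed_of_orbit_eq_singleton
      obtain ⟨hsub, hne⟩ := (Nat.card_eq_one_iff_unique.mp h)
      apply Set.eq_singleton_iff_unique_mem.mpr
      refine ⟨mem_orbit_self x, fun y hy => ?_⟩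
      exact Subtype.ext_iff.mp (hsub.elim ⟨y, hy⟩ ⟨x, mem_orbit_self x⟩)
  set Ω := orbitRel.Quotient H X with hΩ
  haveI : Fintype Ω := Fintype.ofFinite Ω
  haveI : ∀ ω : Ω, Fintype (orbit H (ω.out : X)) := fun ω => Fintype.ofFinite _
  have e1 : Nat.card X = ∑ ω : Ω, Nat.card (orbit H (ω.out : X)) := by
    rw [Nat.card_eq_fintype_card, Fintype.card_congr (selfEquivSigmaOrbits H X),
      Fintype.card_sigma]
    simp [Nat.card_eq_fintype_card]
    congr 1
  set A : Finset Ω := Finset.univ.filter (fun ω => Nat.card (orbit H (ω.out : X)) = 1) with hA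
  have hout : ∀ x : X, g • x = x → ((Quotient.mk'' x : Ω).out : X) = x := by
    intro x hx
    have h1 : (Quotient.mk'' ((Quotient.mk'' x : Ω).out) : Ω) = Quotient.mk'' x :=
      Quotient.out_eq' _
    have h2 : ((Quotient.mk'' x : Ω).out : X) ∈ orbit H x := by
      rw [← orbitRel_apply]
      exact Quotient.exact' h1
    rw [orbit_eq_singleton_of_fixed g x hx] at h2
    exact h2
  have e2 : Nat.card {x : X // g • x = x} = A.card := by
    have hequiv : {x : X // g • x = x} ≃ {ω : Ω // Nat.card (orbit H (ω.out : X)) = 1} :=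
      { toFun := fun x => ⟨Quotient.mk'' x.1, by
          rw [hout x.1 x.2]
          exact (hfix_iff x.1).mp x.2⟩
        invFun := fun ω => ⟨(ω.1.out : X), (hfix_iff _).mpr ω.2⟩
        left_inv := fun x => Subtype.ext (hout x.1 x.2)
        right_inv := fun ω => Subtype.ext (Quotient.out_eq' ω.1) }
    rw [Nat.card_congr hequiv, Nat.card_eq_fintype_card, Fintype.card_subtype, hA]
  have e3 : A.card + (Finset.univ.filter (fun ω : Ω => ¬ Nat.card (orbit H (ω.out : X)) = 1)).card
      = Fintype.card Ω := by
    rw [hA]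
    exact Finset.card_filter_add_card_filter_not _
  have e4 : ∑ ω : Ω, Nat.card (orbit H (ω.out : X))
      = A.card + p * (Finset.univ.filter
        (fun ω : Ω => ¬ Nat.card (orbit H (ω.out : X)) = 1)).card := by
    rw [← Finset.sum_filter_add_sum_filter_not Finset.univ
      (fun ω : Ω => Nat.card (orbit H (ω.out : X)) = 1)]
    congr 1
    · rw [Finset.sum_congr rfl (fun ω hω => (Finset.mem_filter.mp hω).2), Finset.sum_const,
        smul_eq_mul, mul_one, ← hA]
    · rw [Finset.sum_congr rfl (fun ω hω => ?_), Finset.sum_const, smul_eq_mul, mul_comm]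
      rcases horb_cases (ω.out : X) with h | h
      · exact absurd h (Finset.mem_filter.mp hω).2
      · exact h
  rw [e1, e2, e4, Nat.card_eq_fintype_card, ← e3]
  ring

end AuxCounting

section AuxOrder

lemma neg_one_sq' : ((-1 : SL2Z)) * (-1 : SL2Z) = 1 := by
  ext i j
  simp

lemma sq_eq_one_of_mem_pmOne {x : SL2Z} (hx : x ∈ pmOne) : x * x = 1 := by
  obtain ⟨n, rfl⟩ := hx
  rw [← _root_.zpow_add, ← two_mul, _root_.zpow_mul, zpow_two, neg_one_sq',
    _root_.one_zpow]

def Smat : SL2Z := ⟨!![0, -1; 1, 0], by norm_num [Matrix.det_fin_two_of]⟩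
def Umat : SL2Z := ⟨!![0, -1; 1, 1], by norm_num [Matrix.det_fin_two_of]⟩

lemma xi_eq_one_iff (x : SL2Z) : xi x = 1 ↔ x ∈ pmOne := by
  rw [xi, QuotientGroup.mk'_apply, QuotientGroup.eq_one_iff]

lemma xi_ne_one_of_sq (x : SL2Z) (hx : x * x ≠ 1) : xi x ≠ 1 := by
  intro h
  exact hx (sq_eq_one_of_mem_pmOne ((xi_eq_one_iff x).mp h))

lemma orderOf_Sp : orderOf Sp = 2 := by
  have hS : Sp = xi Smat := rfl
  apply orderOf_eq_prime
  · rw [sq, hS, ← _root_.map_mul]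
    have h1 : Smat * Smat = -1 := by
      ext i j
      simp only [Matrix.SpecialLinearGroup.coe_mul]
      fin_cases i <;> fin_cases j <;>
        simp [Smat, Matrix.SpecialLinearGroup.coe_mul, Matrix.mul_apply, Fin.sum_univ_succ]
    rw [h1, xi_eq_one_iff]
    exact Subgroup.mem_zpowers _
  · rw [hS]
    apply xi_ne_one_of_sq
    intro h
    have h2 := congrArg (fun m : SL2Z => (m : Matrix (Fin 2) (Fin 2) ℤ) 0 0) h
    simp only [Matrix.SpecialLinearGroup.coe_mul] at h2
    simp [Smat, Matrix.SpecialLinearGroup.coe_mul, Matrix.mul_apply, Fin.sum_univ_succ] at h2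

lemma orderOf_SpTp : orderOf (Sp * Tp) = 3 := by
  have hU : Sp * Tp = xi Umat := by
    refine (_root_.map_mul xi Smat ⟨!![1, 1; 0, 1], by norm_num [Matrix.det_fin_two_of]⟩).symm.trans ?_
    congr 1
    ext i j
    change ((Smat : Matrix (Fin 2) (Fin 2) ℤ) * (!![1, 1; 0, 1] : Matrix (Fin 2) (Fin 2) ℤ)) i j = (Umat : Matrix (Fin 2) (Fin 2) ℤ) i j
    fin_cases i <;> fin_cases j <;> simp [Umat, Smat, Matrix.SpecialLinearGroup.coe_mul, Matrix.mul_apply, Fin.sum_univ_succ]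
  apply orderOf_eq_prime
  · rw [pow_succ, pow_succ, pow_one, hU, ← _root_.map_mul, ← _root_.map_mul]
    have h1 : Umat * Umat * Umat = -1 := by
      ext i j
      simp only [Matrix.SpecialLinearGroup.coe_mul]
      fin_cases i <;> fin_cases j <;> simp [Umat, Smat, Matrix.SpecialLinearGroup.coe_mul, Matrix.mul_apply, Fin.sum_univ_succ]
    rw [h1, xi_eq_one_iff]
    exact Subgroup.mem_zpowers _
  · rw [hU]
    apply xi_ne_one_of_sq
    intro h
    have h2 := congrArg (fun m : SL2Z => (m : Matrix (Fin 2) (Fin 2) ℤ) 0 1) h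
    simp only [Matrix.SpecialLinearGroup.coe_mul] at h2
    simp [Umat, Smat, Matrix.SpecialLinearGroup.coe_mul, Matrix.mul_apply, Fin.sum_univ_succ] at h2

end AuxOrder

/-- For a genus zero subgroup `Γ` of finite index `n`: `6 ∣ n + 3e₂ + 2e₃`, and if
`n + 3e₂ + 2e₃ = 6k` then `e₂ + e₃ ≤ k + 1`. -/
theorem tfIdx_div_six_and_bound (Γ : Subgroup PSL2Z) (hfi : Γ.index ≠ 0)
    (hg : GenusZero Γ) :
    6 ∣ tfIdx Γ ∧
    ∀ k : ℕ, tfIdx Γ = 6 * k → nFix Sp Γ + nFix (Sp * Tp) Γ ≤ k + 1 := by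
  have hidx : Nat.card (PSL2Z ⧸ Γ) = Γ.index := (Subgroup.index_eq_card Γ).symm
  obtain ⟨hne, hfin⟩ := Nat.card_ne_zero.mp (hidx ▸ hfi : Nat.card (PSL2Z ⧸ Γ) ≠ 0)
  haveI := hne
  haveI := hfin
  have h2 : 2 * nOrb Sp Γ + nFix Sp Γ = Nat.card (PSL2Z ⧸ Γ) + 2 * nFix Sp Γ :=
    prime_order_count (X := PSL2Z ⧸ Γ) Sp Nat.prime_two orderOf_Sp
  have h3 : 3 * nOrb (Sp * Tp) Γ + nFix (Sp * Tp) Γ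
      = Nat.card (PSL2Z ⧸ Γ) + 3 * nFix (Sp * Tp) Γ :=
    prime_order_count (X := PSL2Z ⧸ Γ) (Sp * Tp) Nat.prime_three orderOf_SpTp
  have hT : 1 ≤ nOrb Tp Γ := Nat.card_pos
  unfold GenusZero at hg
  unfold tfIdx
  unfold nOrb nFix at *
  rw [hidx] at h2 h3
  refine ⟨?_, fun k hk => ?_⟩ <;> omega
end
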